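/- Let $P_{XY}$ be a joint probability mass function on $\mathcal{X}\times\mathcal{Y}$ with $|\mathcal{X}|=M$ finite and $\mathcal{Y}$ finite. Let $\mathcal{L}\colon\mathcal{Y}\to\binom{\mathcal{X}}{L}$ be a fixed-size list decoder with $1\le L<M$, and let $P_{\mathcal{L}}=\mathbb{P}[X\notin\mathcal{L}(Y)]$ be its list decoding error probability. Then, for every convex function $f\colon(0,\infty)\to\mathbb{R}$ with $f(1)=0$, $\;\mathbb{E}\bigl[D_f(P_{X|Y}(\cdot|Y)\,\|\,U_M)\bigr]\;\ge\;\frac{L}{M}\,f\!\left(\frac{M(1-P_{\mathcal{L}})}{L}\right)+\left(1-\frac{L}{M}\right)f\!\left(\frac{M P_{\mathcal{L}}}{M-L}\right)$. -/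

import Mathlib

open Filter Topology

open scoped BigOperators

lemma fano_aux_convexOn_Ici (f : ℝ → ℝ) (hf : ConvexOn ℝ (Set.Ioi 0) f)
    (hf0 : Filter.Tendsto f (nhdsWithin 0 (Set.Ioi 0)) (nhds (f 0))) :
    ConvexOn ℝ (Set.Ici 0) f := by
  have hcont : ContinuousOn f (Set.Ioi 0) := by
    have := hf.continuousOn_interior
    rwa [interior_Ioi] at this
  have helper : ∀ b : ℝ, 0 < b → ∀ μ ν : ℝ, 0 ≤ μ → 0 ≤ ν → μ + ν = 1 →
      f (ν * b) ≤ μ * f 0 + ν * f b := by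
    intro b hb μ ν hμ hν hμν
    rcases eq_or_lt_of_le hν with hν0 | hν0
    · have hμ1 : μ = 1 := by linarith
      simp [← hν0, hμ1]
    · have hνb : 0 < ν * b := by positivity
      have hca : ContinuousAt f (ν * b) :=
        hcont.continuousAt (Ioi_mem_nhds hνb)
      have h1 : Tendsto (fun ε : ℝ => f (μ * ε + ν * b)) (nhdsWithin 0 (Set.Ioi 0))
          (nhds (f (ν * b))) := by
        apply hca.tendsto.comp
        have : Tendsto (fun ε : ℝ => μ * ε + ν * b) (nhds 0) (nhds (ν * b)) := by
          have hc : Continuous (fun ε : ℝ => μ * ε + ν * b) := by continuity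
          have := hc.tendsto (0 : ℝ)
          simpa using this
        exact this.mono_left nhdsWithin_le_nhds
      have h2 : Tendsto (fun ε : ℝ => μ * f ε + ν * f b) (nhdsWithin 0 (Set.Ioi 0))
          (nhds (μ * f 0 + ν * f b)) :=
        (tendsto_const_nhds.mul hf0).add tendsto_const_nhds
      refine le_of_tendsto_of_tendsto h1 h2 ?_
      filter_upwards [self_mem_nhdsWithin] with ε hε
      exact hf.2 hε (Set.mem_Ioi.mpr hb) hμ hν hμν
  refine ⟨convex_Ici 0, ?_⟩
  intro a ha b hb μ ν hμ hν hμν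
  simp only [smul_eq_mul]
  rcases eq_or_lt_of_le (Set.mem_Ici.mp ha) with ha0 | ha0
  · rcases eq_or_lt_of_le (Set.mem_Ici.mp hb) with hb0 | hb0
    · have : μ * a + ν * b = 0 := by rw [← ha0, ← hb0]; ring
      rw [this, ← ha0, ← hb0]
      have : μ * f 0 + ν * f 0 = f 0 := by rw [← add_mul, hμν, one_mul]
      linarith
    · have := helper b hb0 μ ν hμ hν hμν
      rw [← ha0]; simpa using this
  · rcases eq_or_lt_of_le (Set.mem_Ici.mp hb) with hb0 | hb0
    · have := helper a ha0 ν μ hν hμ (by linarith)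
      rw [← hb0]
      have e : μ * a + ν * 0 = μ * a := by ring
      rw [e]; linarith
    · exact hf.2 ha0 hb0 hμ hν hμν

/-- **Generalized Fano inequality for fixed-size list decoding, via f-divergences.**
`P x y` is the joint pmf `P_{XY}`, `Lst` is the fixed-size list decoder with lists of
cardinality `L`, and `f` is convex on `(0,∞)` with `f 1 = 0` (the convention
`f 0 = lim_{t↓0} f t` is encoded by the continuity hypothesis `hf0`).  Then the
expectation over `Y` of the `f`-divergence `D_f(P_{X|Y}(·|Y) ‖ U_M)` is lower bounded as
stated. -/
theorem generalized_fano_f_divergence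
    {X Y : Type*} [Fintype X] [Fintype Y] [DecidableEq X]
    (M L : ℕ) (hM : Fintype.card X = M) (hL1 : 1 ≤ L) (hLM : L < M)
    (P : X → Y → ℝ) (hP : ∀ x y, 0 ≤ P x y) (hPsum : ∑ x, ∑ y, P x y = 1)
    (Lst : Y → Finset X) (hLst : ∀ y, (Lst y).card = L)
    (f : ℝ → ℝ) (hf : ConvexOn ℝ (Set.Ioi 0) f) (hf1 : f 1 = 0)
    (hf0 : Filter.Tendsto f (nhdsWithin 0 (Set.Ioi 0)) (nhds (f 0)))
    (PL : ℝ) (hPL : PL = ∑ y, ∑ x ∈ (Lst y)ᶜ, P x y) :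
    ∑ y, (∑ x, P x y) *
        (∑ x : X, (1 / (M : ℝ)) * f ((P x y / ∑ x', P x' y) / (1 / (M : ℝ))))
      ≥ ((L : ℝ) / M) * f ((M : ℝ) * (1 - PL) / L)
        + (1 - (L : ℝ) / M) * f ((M : ℝ) * PL / ((M : ℝ) - L)) := by
  classical
  have hf' := fano_aux_convexOn_Ici f hf hf0
  have hL0 : (0 : ℝ) < L := by exact_mod_cast hL1
  have hML : (L : ℝ) < M := by exact_mod_cast hLM
  have hM0 : (0 : ℝ) < M := lt_trans hL0 hML
  set Q : Y → ℝ := fun y => ∑ x, P x y with hQdef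
  have hQ0 : ∀ y, 0 ≤ Q y := fun y => Finset.sum_nonneg fun x _ => hP x y
  have hQ1 : ∑ y, Q y = 1 := by
    rw [← hPsum]; rw [Finset.sum_comm]
  have hPzero : ∀ x y, Q y = 0 → P x y = 0 := by
    intro x y hy
    have := (Finset.sum_eq_zero_iff_of_nonneg (fun x _ => hP x y)).mp hy
    exact this x (Finset.mem_univ x)
  set w : Y × X → ℝ := fun p => Q p.1 * (1 / M) with hwdef
  set pt : Y × X → ℝ := fun p => (P p.2 p.1 / Q p.1) / (1 / M) with hptdef
  have hw0 : ∀ p : Y × X, 0 ≤ w p := by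
    intro p; have := hQ0 p.1; positivity
  have hpt0 : ∀ p : Y × X, pt p ∈ Set.Ici (0 : ℝ) := by
    intro p
    have h1 : 0 ≤ P p.2 p.1 / Q p.1 := div_nonneg (hP _ _) (hQ0 _)
    have h2 : (0:ℝ) ≤ 1 / M := by positivity
    exact Set.mem_Ici.mpr (div_nonneg h1 h2)
  have hwpt : ∀ p : Y × X, w p * pt p = P p.2 p.1 := by
    intro p
    rcases eq_or_ne (Q p.1) 0 with h | h
    · simp [hwdef, hptdef, h, hPzero p.2 p.1 h]
    · have hM' : (M : ℝ) ≠ 0 := ne_of_gt hM0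
      simp only [hwdef, hptdef]
      field_simp
  -- the two groups
  set A : Finset (Y × X) := Finset.univ.filter (fun p => p.2 ∈ Lst p.1) with hAdef
  set B : Finset (Y × X) := Finset.univ.filter (fun p => ¬ p.2 ∈ Lst p.1) with hBdef
  -- weight sums
  have hsum_prod : ∀ g : Y × X → ℝ, (∀ p : Y × X, ¬ p.2 ∈ Lst p.1 → g p = 0) →
      ∑ p ∈ A, g p = ∑ y, ∑ x ∈ Lst y, g (y, x) := by
    intro g hg
    rw [hAdef, Finset.sum_filter, ← Finset.univ_product_univ, Finset.sum_product]
    congr 1; ext y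
    rw [Finset.sum_ite, Finset.sum_const_zero, add_zero]
    apply Finset.sum_congr
    · ext x; simp
    · intro x _; rfl
  have hsum_prodB : ∀ g : Y × X → ℝ,
      ∑ p ∈ B, g p = ∑ y, ∑ x ∈ (Lst y)ᶜ, g (y, x) := by
    intro g
    rw [hBdef, Finset.sum_filter, ← Finset.univ_product_univ, Finset.sum_product]
    congr 1; ext y
    rw [Finset.sum_ite, Finset.sum_const_zero, add_zero]
    apply Finset.sum_congr
    · ext x; simp
    · intro x _; rfl
  have hsum_prodA : ∀ g : Y × X → ℝ,
      ∑ p ∈ A, g p = ∑ y, ∑ x ∈ Lst y, g (y, x) := by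
    intro g
    rw [hAdef, Finset.sum_filter, ← Finset.univ_product_univ, Finset.sum_product]
    congr 1; ext y
    rw [Finset.sum_ite, Finset.sum_const_zero, add_zero]
    apply Finset.sum_congr
    · ext x; simp
    · intro x _; rfl
  have hwA : ∑ p ∈ A, w p = (L : ℝ) / M := by
    rw [hsum_prodA w]
    have : ∀ y, ∑ x ∈ Lst y, w (y, x) = (L : ℝ) / M * Q y := by
      intro y
      simp only [hwdef]
      rw [Finset.sum_const, hLst y, nsmul_eq_mul]
      ring
    rw [Finset.sum_congr rfl (fun y _ => this y), ← Finset.mul_sum, hQ1, mul_one]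
  have hcardc : ∀ y, ((Lst y)ᶜ : Finset X).card = M - L := by
    intro y; rw [Finset.card_compl, hLst y, hM]
  have hMLcast : ((M - L : ℕ) : ℝ) = (M : ℝ) - L := by
    exact_mod_cast Nat.cast_sub hLM.le
  have hwB : ∑ p ∈ B, w p = ((M : ℝ) - L) / M := by
    rw [hsum_prodB w]
    have : ∀ y, ∑ x ∈ (Lst y)ᶜ, w (y, x) = ((M : ℝ) - L) / M * Q y := by
      intro y
      simp only [hwdef]
      rw [Finset.sum_const, hcardc y, nsmul_eq_mul, hMLcast]
      ring
    rw [Finset.sum_congr rfl (fun y _ => this y), ← Finset.mul_sum, hQ1, mul_one]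
  -- mass sums
  have hmB : ∑ p ∈ B, w p * pt p = PL := by
    rw [hsum_prodB (fun p => w p * pt p)]
    rw [hPL]
    exact Finset.sum_congr rfl fun y _ => Finset.sum_congr rfl fun x _ => hwpt (y, x)
  have hmA : ∑ p ∈ A, w p * pt p = 1 - PL := by
    rw [hsum_prodA (fun p => w p * pt p)]
    have h1 : ∑ y, ∑ x ∈ Lst y, w (y, x) * pt (y, x) = ∑ y, ∑ x ∈ Lst y, P x y :=
      Finset.sum_congr rfl fun y _ => Finset.sum_congr rfl fun x _ => hwpt (y, x)
    rw [h1]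
    have h2 : (∑ y, ∑ x ∈ Lst y, P x y) + PL = 1 := by
      rw [hPL, ← Finset.sum_add_distrib, ← hQ1]
      apply Finset.sum_congr rfl
      intro y _
      rw [Finset.sum_add_sum_compl]
    linarith
  -- Jensen on A
  have hJA : ((L : ℝ) / M) * f ((M : ℝ) * (1 - PL) / L) ≤ ∑ p ∈ A, w p * f (pt p) := by
    have hpos : 0 < ∑ p ∈ A, w p := by rw [hwA]; positivity
    have h := hf'.map_centerMass_le (t := A) (w := w) (p := pt)
      (fun p _ => hw0 p) hpos (fun p _ => hpt0 p)
    rw [Finset.centerMass, Finset.centerMass] at h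
    simp only [smul_eq_mul, Function.comp] at h
    rw [hwA] at h
    have hmA' : ∑ p ∈ A, w p * pt p = 1 - PL := hmA
    rw [hmA'] at h
    have he : ((L : ℝ) / M)⁻¹ * (1 - PL) = (M : ℝ) * (1 - PL) / L := by
      field_simp
    rw [he] at h
    have hc : (0 : ℝ) < (L : ℝ) / M := by positivity
    calc ((L : ℝ) / M) * f ((M : ℝ) * (1 - PL) / L)
        ≤ ((L : ℝ) / M) * (((L : ℝ) / M)⁻¹ * ∑ p ∈ A, w p * f (pt p)) := by
          exact mul_le_mul_of_nonneg_left h hc.le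
      _ = ∑ p ∈ A, w p * f (pt p) := by
          rw [← mul_assoc, mul_inv_cancel₀ (ne_of_gt hc), one_mul]
  -- Jensen on B
  have hJB : (1 - (L : ℝ) / M) * f ((M : ℝ) * PL / ((M : ℝ) - L)) ≤
      ∑ p ∈ B, w p * f (pt p) := by
    have hpos : 0 < ∑ p ∈ B, w p := by
      rw [hwB]; exact div_pos (by linarith) hM0
    have h := hf'.map_centerMass_le (t := B) (w := w) (p := pt)
      (fun p _ => hw0 p) hpos (fun p _ => hpt0 p)
    rw [Finset.centerMass, Finset.centerMass] at h
    simp only [smul_eq_mul, Function.comp] at h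
    rw [hwB, hmB] at h
    have he : (((M : ℝ) - L) / M)⁻¹ * PL = (M : ℝ) * PL / ((M : ℝ) - L) := by
      field_simp
    rw [he] at h
    have hc : (0 : ℝ) < ((M : ℝ) - L) / M := by
      apply div_pos; linarith; exact hM0
    have hcoef : 1 - (L : ℝ) / M = ((M : ℝ) - L) / M := by field_simp
    rw [hcoef]
    calc (((M : ℝ) - L) / M) * f ((M : ℝ) * PL / ((M : ℝ) - L))
        ≤ (((M : ℝ) - L) / M) * ((((M : ℝ) - L) / M)⁻¹ * ∑ p ∈ B, w p * f (pt p)) := by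
          exact mul_le_mul_of_nonneg_left h hc.le
      _ = ∑ p ∈ B, w p * f (pt p) := by
          rw [← mul_assoc, mul_inv_cancel₀ (ne_of_gt hc), one_mul]
  -- rewrite LHS
  have hLHS : ∑ y, Q y *
        (∑ x : X, (1 / (M : ℝ)) * f ((P x y / Q y) / (1 / (M : ℝ))))
      = (∑ p ∈ A, w p * f (pt p)) + ∑ p ∈ B, w p * f (pt p) := by
    rw [Finset.sum_filter_add_sum_filter_not Finset.univ (fun p : Y × X => p.2 ∈ Lst p.1)
      (fun p => w p * f (pt p))]
    rw [← Finset.univ_product_univ, Finset.sum_product]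
    apply Finset.sum_congr rfl
    intro y _
    rw [Finset.mul_sum]
    apply Finset.sum_congr rfl
    intro x _
    rw [hwdef, hptdef]
    ring
  calc ∑ y, Q y * (∑ x : X, (1 / (M : ℝ)) * f ((P x y / Q y) / (1 / (M : ℝ))))
      = (∑ p ∈ A, w p * f (pt p)) + ∑ p ∈ B, w p * f (pt p) := hLHS
    _ ≥ ((L : ℝ) / M) * f ((M : ℝ) * (1 - PL) / L)
        + (1 - (L : ℝ) / M) * f ((M : ℝ) * PL / ((M : ℝ) - L)) := add_le_add hJA hJB
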